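/- π_1 ≪ π_0 holds whenever P_1 ≪ P_0; i.e., for any measurable A with π_0(A) = 0, the marginally specified prior satisfies π_1(A) = 0. -/

import Mathlib

open MeasureTheory ProbabilityTheory
open scoped ENNReal

/-- π₁ ≪ π₀ whenever P₁ ≪ P₀. -/
theorem msp_absolutely_continuous
    {F Θ : Type*} [MeasurableSpace F] [MeasurableSpace Θ]
    (π₀ : Measure F) [IsProbabilityMeasure π₀]
    (θ : F → Θ) (hθ : Measurable θ)
    (κ : Kernel Θ F) [IsMarkovKernel κ]
    (hdis : ∀ (A : Set F) (B : Set Θ), MeasurableSet A → MeasurableSet B →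
      π₀ (A ∩ θ ⁻¹' B) = ∫⁻ t in B, κ t A ∂(π₀.map θ))
    (P₁ : Measure Θ) [IsProbabilityMeasure P₁]
    (hac : P₁ ≪ π₀.map θ) :
    ∀ A : Set F, MeasurableSet A → π₀ A = 0 → P₁.bind κ A = 0 := by
  intro A hA hA0
  have h := hdis A Set.univ hA MeasurableSet.univ
  simp only [Set.preimage_univ, Set.inter_univ, Measure.restrict_univ] at h
  rw [hA0] at h
  have hzero : ∀ᵐ t ∂(π₀.map θ), κ t A = 0 :=
    (lintegral_eq_zero_iff (κ.measurable_coe hA)).mp h.symm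
  have hzero₁ : ∀ᵐ t ∂P₁, κ t A = 0 := hac.ae_le hzero
  rw [Measure.bind_apply hA κ.measurable.aemeasurable]
  exact lintegral_eq_zero_iff (κ.measurable_coe hA) |>.mpr hzero₁
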